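/- Every ordered tree with interval chromatic number two that contains none of the three ordered paths $P$, $Q$, $R$ is a $z$-tree. -/

import Mathlib

/-- Vertex set of an ordered-graph pattern given by its edge set. -/
def verts (E : Finset (ℕ × ℕ)) : Finset ℕ := E.image Prod.fst ∪ E.image Prod.snd

/-- The simple graph on ℕ determined by an edge set. -/
def patGraph (E : Finset (ℕ × ℕ)) : SimpleGraph ℕ :=
  SimpleGraph.fromRel (fun a b => (a, b) ∈ E)

/-- `E` is the edge set of an ordered tree (edges written (x,y) with x < y):
it has one more vertex than edges and is connected. -/
def PatTree (E : Finset (ℕ × ℕ)) : Prop :=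
  (∀ p ∈ E, p.1 < p.2) ∧ (verts E).card = E.card + 1 ∧
    ∀ a ∈ verts E, ∀ b ∈ verts E, (patGraph E).Reachable a b

/-- Interval chromatic number two: all edges straddle a common split point. -/
def IntervalChrom2 (E : Finset (ℕ × ℕ)) : Prop :=
  ∃ m : ℕ, ∀ p ∈ E, p.1 ≤ m ∧ m < p.2

/-- `W` is the edge set of a three-edge ordered path. -/
def IsOrderedPath3 (W : Finset (ℕ × ℕ)) : Prop :=
  ∃ w1 w2 w3 w4 : ℕ, [w1, w2, w3, w4].Nodup ∧
    W = {(min w1 w2, max w1 w2), (min w2 w3, max w2 w3), (min w3 w4, max w3 w4)}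

/-- Some two edges of the pattern cross. -/
def HasCrossingPair (W : Finset (ℕ × ℕ)) : Prop :=
  ∃ p ∈ W, ∃ q ∈ W, p.1 < q.1 ∧ q.1 < p.2 ∧ p.2 < q.2

/-- The three forbidden configurations P, Q, R: a three-edge ordered path of interval
chromatic number two containing a crossing pair of edges. -/
def CrossingP3 (W : Finset (ℕ × ℕ)) : Prop :=
  IsOrderedPath3 W ∧ IntervalChrom2 W ∧ HasCrossingPair W

/-- Ordered containment of one pattern in another (order-preserving, edge-preserving). -/
def PatContains (host pat : Finset (ℕ × ℕ)) : Prop :=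
  ∃ f : ℕ → ℕ, (∀ x ∈ verts pat, ∀ y ∈ verts pat, x < y → f x < f y) ∧
    ∀ p ∈ pat, (f p.1, f p.2) ∈ host


/-- An increasing (ordered) tree with its current longest edge (i,j). -/
inductive IncTree : Finset (ℕ × ℕ) → ℕ → ℕ → Prop
  | single (i j : ℕ) : i < j → IncTree {(i, j)} i j
  | right (E : Finset (ℕ × ℕ)) (i j j' : ℕ) :
      IncTree E i j → j < j' → IncTree (insert (i, j') E) i j'
  | left (E : Finset (ℕ × ℕ)) (i j i' : ℕ) :
      IncTree E i j → i' < i → IncTree (insert (i', j) E) i' j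

/-- A z-tree: union of an increasing tree T with longest edge (i,j), a set S_j of edges
(h,j) with h < i, and a set S_i of edges (i,k) with k > j. -/
def ZTree (E : Finset (ℕ × ℕ)) : Prop :=
  ∃ (T Sj Si : Finset (ℕ × ℕ)) (i j : ℕ), IncTree T i j ∧
    (∀ p ∈ Sj, p.2 = j ∧ p.1 < i) ∧ (∀ p ∈ Si, p.1 = i ∧ j < p.2) ∧ E = T ∪ Sj ∪ Si

namespace ZtAux

def pedge (u v : ℕ) : ℕ × ℕ := (min u v, max u v)

def Sub (e f : ℕ × ℕ) : Prop := f.1 ≤ e.1 ∧ e.2 ≤ f.2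

def Comp (e f : ℕ × ℕ) : Prop := Sub e f ∨ Sub f e

lemma pedge_comm (u v : ℕ) : pedge u v = pedge v u := by
  simp [pedge, min_comm, max_comm]

variable {E : Finset (ℕ × ℕ)} {m : ℕ}

lemma nocross (hm : ∀ p ∈ E, p.1 ≤ m ∧ m < p.2)
    (hfree : ∀ W : Finset (ℕ × ℕ), CrossingP3 W → ¬ PatContains E W)
    (a b c d : ℕ)
    (hab : a ≠ b) (hac : a ≠ c) (had : a ≠ d) (hbc : b ≠ c) (hbd : b ≠ d) (hcd : c ≠ d)
    (e1 : pedge a b ∈ E) (e2 : pedge b c ∈ E) (e3 : pedge c d ∈ E)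
    (h1 : min a b < min c d) (h2 : max a b < max c d) : False := by
  apply hfree ({pedge a b, pedge b c, pedge c d} : Finset (ℕ × ℕ))
  · refine ⟨⟨a, b, c, d, by simp [hab, hac, had, hbc, hbd, hcd], by rfl⟩, ⟨m, ?_⟩, ?_⟩
    · intro p hp
      simp only [Finset.mem_insert, Finset.mem_singleton] at hp
      rcases hp with rfl | rfl | rfl
      · exact hm _ e1
      · exact hm _ e2
      · exact hm _ e3
    · refine ⟨pedge a b, by simp, pedge c d, by simp, h1, ?_, h2⟩
      have s1 := hm _ e1
      have s3 := hm _ e3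
      simp only [pedge] at s1 s3 ⊢
      omega
  · refine ⟨id, fun x _ y _ h => h, ?_⟩
    intro p hp
    simp only [Finset.mem_insert, Finset.mem_singleton] at hp
    rcases hp with rfl | rfl | rfl <;> simpa

lemma nested (hm : ∀ p ∈ E, p.1 ≤ m ∧ m < p.2)
    (hfree : ∀ W : Finset (ℕ × ℕ), CrossingP3 W → ¬ PatContains E W)
    (a b c d : ℕ)
    (hab : a ≠ b) (hac : a ≠ c) (had : a ≠ d) (hbc : b ≠ c) (hbd : b ≠ d) (hcd : c ≠ d)
    (e1 : pedge a b ∈ E) (e2 : pedge b c ∈ E) (e3 : pedge c d ∈ E) :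
    Comp (pedge a b) (pedge c d) := by
  by_contra h
  have s1 := hm _ e1
  have s3 := hm _ e3
  have hsplit : (min a b < min c d ∧ max a b < max c d) ∨
      (min c d < min a b ∧ max c d < max a b) := by
    simp only [Comp, Sub, pedge, not_or, not_and] at h
    simp only [pedge] at s1 s3
    omega
  rcases hsplit with ⟨h1, h2⟩ | ⟨h1, h2⟩
  · exact nocross hm hfree a b c d hab hac had hbc hbd hcd e1 e2 e3 h1 h2
  · exact nocross hm hfree d c b a (Ne.symm hcd) (Ne.symm hbd) (Ne.symm had)
      (Ne.symm hbc) (Ne.symm hac) (Ne.symm hab)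
      (by rwa [pedge_comm]) (by rwa [pedge_comm]) (by rwa [pedge_comm])
      (by simpa [min_comm] using h1) (by simpa [max_comm] using h2)

lemma step (m v0 v1 v2 v3 : ℕ)
    (h01 : (pedge v0 v1).1 ≤ m ∧ m < (pedge v0 v1).2)
    (h12 : (pedge v1 v2).1 ≤ m ∧ m < (pedge v1 v2).2)
    (h23 : (pedge v2 v3).1 ≤ m ∧ m < (pedge v2 v3).2)
    (h02 : v0 ≠ v2) (h13 : v1 ≠ v3)
    (hc : Comp (pedge v0 v1) (pedge v2 v3)) :
    (Sub (pedge v0 v1) (pedge v1 v2) ∧ Sub (pedge v1 v2) (pedge v2 v3)) ∨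
    (Sub (pedge v1 v2) (pedge v0 v1) ∧ Sub (pedge v2 v3) (pedge v1 v2)) := by
  simp only [Comp, Sub, pedge] at *
  omega

lemma adjComp (m a b c : ℕ)
    (h01 : (pedge a b).1 ≤ m ∧ m < (pedge a b).2)
    (h12 : (pedge b c).1 ≤ m ∧ m < (pedge b c).2) :
    Comp (pedge a b) (pedge b c) := by
  simp only [Comp, Sub, pedge] at *
  omega

def lastE : ℕ → ℕ → List ℕ → ℕ × ℕ
  | a, b, [] => pedge a b
  | _, b, c :: l => lastE b c l

def DirUp : ℕ → ℕ → List ℕ → Prop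
  | _, _, [] => True
  | a, b, c :: l => Sub (pedge a b) (pedge b c) ∧ DirUp b c l

def DirDown : ℕ → ℕ → List ℕ → Prop
  | _, _, [] => True
  | a, b, c :: l => Sub (pedge b c) (pedge a b) ∧ DirDown b c l

lemma sub_trans {e f g : ℕ × ℕ} (h1 : Sub e f) (h2 : Sub f g) : Sub e g :=
  ⟨le_trans h2.1 h1.1, le_trans h1.2 h2.2⟩

lemma dirUp_last : ∀ (l : List ℕ) (a b : ℕ), DirUp a b l → Sub (pedge a b) (lastE a b l)
  | [], _, _, _ => ⟨le_refl _, le_refl _⟩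
  | _ :: l, a, b, h => sub_trans h.1 (dirUp_last l b _ h.2)

lemma dirDown_last : ∀ (l : List ℕ) (a b : ℕ), DirDown a b l → Sub (lastE a b l) (pedge a b)
  | [], _, _, _ => ⟨le_refl _, le_refl _⟩
  | _ :: l, a, b, h => sub_trans (dirDown_last l b _ h.2) h.1

lemma lastE_append₂ : ∀ (l : List ℕ) (a b c d : ℕ), lastE a b (l ++ [c, d]) = pedge c d
  | [], _, _, _, _ => rfl
  | e :: l, a, b, c, d => lastE_append₂ l b e c d

lemma lastE_append₁ : ∀ (l : List ℕ) (a b c d : ℕ), (a :: b :: l).getLast? = some d →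
    lastE a b (l ++ [c]) = pedge d c
  | [], a, b, c, d, h => by
      simp only [List.getLast?_cons_cons, List.getLast?_singleton, Option.some.injEq] at h
      subst h; rfl
  | e :: l, a, b, c, d, h =>
      lastE_append₁ l b e c d (by simpa using h)



def R (E : Finset (ℕ × ℕ)) (u v : ℕ) : Prop := pedge u v ∈ E

lemma chain_dir (hm : ∀ p ∈ E, p.1 ≤ m ∧ m < p.2)
    (hfree : ∀ W : Finset (ℕ × ℕ), CrossingP3 W → ¬ PatContains E W) :
    ∀ (l : List ℕ) (a b : ℕ), (a :: b :: l).Nodup →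
      List.Chain' (R E) (a :: b :: l) → DirUp a b l ∨ DirDown a b l := by
  intro l
  induction l with
  | nil => intro a b _ _; exact Or.inl trivial
  | cons c l ih =>
    intro a b hnd hch
    have hRab : pedge a b ∈ E := (List.isChain_cons_cons.mp hch).1
    have hch' : List.Chain' (R E) (b :: c :: l) := (List.isChain_cons_cons.mp hch).2
    have hRbc : pedge b c ∈ E := (List.isChain_cons_cons.mp hch').1
    have hnd' : (b :: c :: l).Nodup := hnd.of_cons
    have hIH := ih b c hnd' hch'
    cases l with
    | nil =>
      rcases adjComp m a b c (hm _ hRab) (hm _ hRbc) with h | h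
      · exact Or.inl ⟨h, trivial⟩
      · exact Or.inr ⟨h, trivial⟩
    | cons d l' =>
      have hRcd : pedge c d ∈ E := (List.isChain_cons_cons.mp (List.isChain_cons_cons.mp hch').2).1
      have hnes : ¬(a = b) ∧ ¬(a = c) ∧ ¬(a = d) ∧ ¬(b = c) ∧ ¬(b = d) ∧ ¬(c = d) := by
        have h := hnd
        simp only [List.nodup_cons, List.mem_cons, not_or] at h
        obtain ⟨⟨hab, hac, had, -⟩, ⟨hbc, hbd, -⟩, ⟨hcd, -⟩, -⟩ := h
        exact ⟨hab, hac, had, hbc, hbd, hcd⟩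
      obtain ⟨hab, hac, had, hbc, hbd, hcd⟩ := hnes
      have hcomp : Comp (pedge a b) (pedge c d) :=
        nested hm hfree a b c d hab hac had hbc hbd hcd hRab hRbc hRcd
      have hstep := step m a b c d (hm _ hRab) (hm _ hRbc) (hm _ hRcd) hac hbd hcomp
      rcases hIH with hup | hdown
      · left
        refine ⟨?_, hup⟩
        rcases hstep with ⟨h1, _⟩ | ⟨-, h2⟩
        · exact h1
        · exfalso
          have hu := hup.1
          have s1 := hm _ hRbc
          have s2 := hm _ hRcd
          simp only [Sub, pedge] at hu h2 s1 s2
          omega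
      · right
        refine ⟨?_, hdown⟩
        rcases hstep with ⟨-, h2⟩ | ⟨h1, -⟩
        · exfalso
          have hu := hdown.1
          have s1 := hm _ hRbc
          have s2 := hm _ hRcd
          simp only [Sub, pedge] at hu h2 s1 s2
          omega
        · exact h1

lemma chain_comp (hm : ∀ p ∈ E, p.1 ≤ m ∧ m < p.2)
    (hfree : ∀ W : Finset (ℕ × ℕ), CrossingP3 W → ¬ PatContains E W)
    (l : List ℕ) (a b : ℕ) (hnd : (a :: b :: l).Nodup)
    (hch : List.Chain' (R E) (a :: b :: l)) :
    Comp (pedge a b) (lastE a b l) := by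
  rcases chain_dir hm hfree l a b hnd hch with h | h
  · exact Or.inl (dirUp_last l a b h)
  · exact Or.inr (dirDown_last l a b h)


lemma adj_R (hlt : ∀ p ∈ E, p.1 < p.2) {x y : ℕ} (h : (patGraph E).Adj x y) :
    pedge x y ∈ E := by
  unfold patGraph at h
  rw [SimpleGraph.fromRel_adj] at h
  obtain ⟨hne, h | h⟩ := h
  · have hx := hlt _ h
    have hp : pedge x y = (x, y) := by
      simp only [pedge]; rw [min_eq_left, max_eq_right] <;> omega
    rwa [hp]
  · have hx := hlt _ h
    have hp : pedge x y = (y, x) := by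
      simp only [pedge]; rw [min_eq_right, max_eq_left] <;> omega
    rwa [hp]

lemma all_comp (hm : ∀ p ∈ E, p.1 ≤ m ∧ m < p.2) (hlt : ∀ p ∈ E, p.1 < p.2)
    (hconn : ∀ a ∈ verts E, ∀ b ∈ verts E, (patGraph E).Reachable a b)
    (hfree : ∀ W : Finset (ℕ × ℕ), CrossingP3 W → ¬ PatContains E W) :
    ∀ e ∈ E, ∀ f ∈ E, Comp e f := by
  intro e he f hf
  obtain ⟨a, b⟩ := e
  obtain ⟨c, d⟩ := f
  have hab : a ≤ m ∧ m < b := hm _ he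
  have hcd : c ≤ m ∧ m < d := hm _ hf
  by_cases hsh : a = c ∨ b = d
  · simp only [Comp, Sub]; omega
  push_neg at hsh
  obtain ⟨hac, hbd⟩ := hsh
  have hpab : pedge a b = (a, b) := by
    simp only [pedge]; rw [min_eq_left, max_eq_right] <;> omega
  have hpcd : pedge c d = (c, d) := by
    simp only [pedge]; rw [min_eq_left, max_eq_right] <;> omega
  have hbv : b ∈ verts E := Finset.mem_union_right _ (Finset.mem_image.mpr ⟨(a, b), he, rfl⟩)
  have hdv : d ∈ verts E := Finset.mem_union_right _ (Finset.mem_image.mpr ⟨(c, d), hf, rfl⟩)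
  obtain ⟨w⟩ := hconn b hbv d hdv
  have hp : w.bypass.IsPath := w.bypass_isPath
  have hnd : w.bypass.support.Nodup := hp.support_nodup
  have hch : List.Chain' (R E) w.bypass.support :=
    (SimpleGraph.Walk.isChain_adj_support _).imp (fun _ _ h => adj_R hlt h)
  have hlast : w.bypass.support.getLast? = some d := by
    rw [List.getLast?_eq_getLast_of_ne_nil w.bypass.support_ne_nil]
    exact congrArg some w.bypass.getLast_support
  obtain ⟨l0, hl0⟩ : ∃ l0, w.bypass.support = b :: l0 := ⟨_, w.bypass.support_eq_cons⟩
  rw [hl0] at hnd hch hlast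
  clear hl0 hp
  -- Step A : a list x :: y :: t with pedge x y = pedge a b, ending at d
  have stepA : ∃ x y t, pedge x y = (a, b) ∧ (x :: y :: t).Nodup ∧
      List.Chain' (R E) (x :: y :: t) ∧ (x :: y :: t).getLast? = some d := by
    by_cases ha : a ∈ b :: l0
    · have ha' : a ∈ l0 := by
        rcases List.mem_cons.mp ha with h | h
        · omega
        · exact h
      obtain ⟨l1, l2, hsp⟩ := List.append_of_mem ha'
      rw [hsp] at hnd hch hlast
      have hform : b :: l1 ++ a :: l2 = b :: (l1 ++ a :: l2) := by simp
      rw [← hform] at hnd hch hlast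
      obtain ⟨nd1, nd2, disj⟩ := List.nodup_append'.mp hnd
      obtain ⟨cA, cB, -⟩ := List.isChain_append.mp hch
      refine ⟨b, a, l2, by rw [pedge_comm]; exact hpab, ?_, ?_, ?_⟩
      · exact List.nodup_cons.mpr ⟨fun hb => disj (List.mem_cons_self (a := b) (l := l1)) hb, nd2⟩
      · exact List.isChain_cons_cons.mpr ⟨by simpa [R, pedge_comm b a, hpab] using he, cB⟩
      · rw [List.getLast?_cons_cons]
        rw [List.getLast?_append_of_ne_nil _ (List.cons_ne_nil a l2)] at hlast
        exact hlast
    · refine ⟨a, b, l0, hpab, List.nodup_cons.mpr ⟨ha, hnd⟩, ?_, ?_⟩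
      · exact List.isChain_cons_cons.mpr ⟨by simpa [R, hpab] using he, hch⟩
      · rw [List.getLast?_cons_cons]; exact hlast
  obtain ⟨x, y, t, hxy, hnd2, hch2, hlast2⟩ := stepA
  -- x and y are a, b in some order
  have hxyv : (x = a ∧ y = b) ∨ (x = b ∧ y = a) := by
    have h1 := congrArg Prod.fst hxy
    have h2 := congrArg Prod.snd hxy
    simp only [pedge] at h1 h2
    omega
  have hcx : c ≠ x := by rcases hxyv with ⟨rfl, rfl⟩ | ⟨rfl, rfl⟩ <;> omega
  have hcy : c ≠ y := by rcases hxyv with ⟨rfl, rfl⟩ | ⟨rfl, rfl⟩ <;> omega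
  have hdx : d ≠ x := by rcases hxyv with ⟨rfl, rfl⟩ | ⟨rfl, rfl⟩ <;> omega
  have hdy : d ≠ y := by rcases hxyv with ⟨rfl, rfl⟩ | ⟨rfl, rfl⟩ <;> omega
  rw [← hxy, ← hpcd]
  -- Step B
  by_cases hcm : c ∈ x :: y :: t
  · have hct : c ∈ t := by
      rcases List.mem_cons.mp hcm with h | h
      · exact absurd h hcx
      rcases List.mem_cons.mp h with h' | h'
      · exact absurd h' hcy
      · exact h'
    obtain ⟨t1, t2, hsp⟩ := List.append_of_mem hct
    rw [hsp] at hnd2 hch2 hlast2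
    have hform : x :: y :: (t1 ++ c :: t2) = (x :: y :: t1) ++ (c :: t2) := by simp
    rw [hform] at hnd2 hch2 hlast2
    obtain ⟨ndA, ndB, disj⟩ := List.nodup_append'.mp hnd2
    obtain ⟨cA, cB, link⟩ := List.isChain_append.mp hch2
    have hlastB : (c :: t2).getLast? = some d := by
      rwa [List.getLast?_append_of_ne_nil _ (List.cons_ne_nil c t2)] at hlast2
    have hdmem : d ∈ c :: t2 := by
      obtain ⟨hne, hd⟩ := List.mem_getLast?_eq_getLast (Option.mem_def.mpr hlastB)
      rw [hd]; exact List.getLast_mem hne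
    have hdc : d ≠ c := by omega
    -- the new list
    have hchL : List.Chain' (R E) ((x :: y :: t1) ++ [c]) := by
      refine List.isChain_append.mpr ⟨cA, List.isChain_singleton c, ?_⟩
      intro p hp q hq
      simp only [List.head?_cons, Option.mem_def, Option.some.injEq] at hq
      subst hq
      exact link p hp c rfl
    have hchL2 : List.Chain' (R E) (((x :: y :: t1) ++ [c]) ++ [d]) := by
      refine List.isChain_append.mpr ⟨hchL, List.isChain_singleton d, ?_⟩
      intro p hp q hq
      simp only [List.head?_cons, Option.mem_def, Option.some.injEq] at hq
      subst hq
      rw [Option.mem_def, List.getLast?_concat] at hp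
      cases hp
      simpa [R, hpcd] using hf
    have hndL : ((x :: y :: t1) ++ [c]).Nodup :=
      hnd2.sublist (List.Sublist.append_left ((List.nil_sublist t2).cons₂ c) _)
    have hdnL : d ∉ (x :: y :: t1) ++ [c] := by
      intro hmem
      rcases List.mem_append.mp hmem with h | h
      · exact disj h hdmem
      · simp only [List.mem_singleton] at h; exact hdc h
    have hndL2 : (((x :: y :: t1) ++ [c]) ++ [d]).Nodup := by
      refine List.nodup_append'.mpr ⟨hndL, List.nodup_singleton d, ?_⟩
      intro z hz hz'
      simp only [List.mem_singleton] at hz'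
      subst hz'
      exact hdnL hz
    have hshape : ((x :: y :: t1) ++ [c]) ++ [d] = x :: y :: (t1 ++ [c, d]) := by simp
    rw [hshape] at hchL2 hndL2
    have := chain_comp hm hfree (t1 ++ [c, d]) x y hndL2 hchL2
    rwa [lastE_append₂] at this
  · -- c not on the list : just append it
    have hchL : List.Chain' (R E) ((x :: y :: t) ++ [c]) := by
      refine List.isChain_append.mpr ⟨hch2, List.isChain_singleton c, ?_⟩
      intro p hp q hq
      simp only [List.head?_cons, Option.mem_def, Option.some.injEq] at hq
      subst hq
      rw [Option.mem_def, hlast2] at hp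
      cases hp
      show pedge d c ∈ E
      rw [pedge_comm, hpcd]; exact hf
    have hndL : ((x :: y :: t) ++ [c]).Nodup := by
      refine List.nodup_append'.mpr ⟨hnd2, List.nodup_singleton c, ?_⟩
      intro z hz hz'
      simp only [List.mem_singleton] at hz'
      subst hz'
      exact hcm hz
    have hshape : (x :: y :: t) ++ [c] = x :: y :: (t ++ [c]) := by simp
    rw [hshape] at hchL hndL
    have := chain_comp hm hfree (t ++ [c]) x y hndL hchL
    rwa [lastE_append₁ t x y c d hlast2, pedge_comm d c] at this


lemma chain_card : ∀ S : Finset (ℕ × ℕ), S.Nonempty → (∀ e ∈ S, e.1 < e.2) →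
    (∀ e ∈ S, ∀ f ∈ S, Comp e f) →
    S.card + 1 ≤ (S.image Prod.fst).card + (S.image Prod.snd).card := by
  intro S
  induction S using Finset.strongInduction with
  | _ S ih =>
    intro hne hlt hcomp
    obtain ⟨f, hfS, hfmax⟩ := S.exists_max_image (fun e => e.2 - e.1) hne
    have hmax : ∀ g ∈ S, Sub g f := by
      intro g hg
      have h1 := hcomp g hg f hfS
      have h2 := hfmax g hg
      have h3 := hlt g hg
      have h4 := hlt f hfS
      simp only [Comp, Sub] at h1 ⊢
      omega
    by_cases h0 : S.erase f = ∅
    · have hSf : S = {f} := by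
        rcases Finset.erase_eq_empty_iff S f |>.mp h0 with h | h
        · exact absurd h (Finset.nonempty_iff_ne_empty.mp hne)
        · exact h
      subst hSf
      simp
    · have hne' : (S.erase f).Nonempty := Finset.nonempty_iff_ne_empty.mpr h0
      have hIH := ih (S.erase f) (Finset.erase_ssubset hfS) hne'
        (fun e he => hlt e (Finset.mem_of_mem_erase he))
        (fun e he g hg => hcomp e (Finset.mem_of_mem_erase he) g (Finset.mem_of_mem_erase hg))
      have hkey : f.1 ∉ (S.erase f).image Prod.fst ∨ f.2 ∉ (S.erase f).image Prod.snd := by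
        by_contra h
        push_neg at h
        obtain ⟨h1, h2⟩ := h
        obtain ⟨g, hg, hg1⟩ := Finset.mem_image.mp h1
        obtain ⟨k, hk, hk2⟩ := Finset.mem_image.mp h2
        have hgS := Finset.mem_of_mem_erase hg
        have hkS := Finset.mem_of_mem_erase hk
        have hgf := hmax g hgS
        have hkf := hmax k hkS
        have hgne := (Finset.mem_erase.mp hg).1
        have hkne := (Finset.mem_erase.mp hk).1
        rcases hcomp g hgS k hkS with hs | hs
        · apply hkne
          have e1 : k.1 = f.1 := by simp only [Sub] at hs hgf hkf; omega
          have e2 : k.2 = f.2 := hk2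
          exact Prod.ext e1 e2
        · apply hgne
          have e1 : g.1 = f.1 := hg1
          have e2 : g.2 = f.2 := by simp only [Sub] at hs hgf hkf; omega
          exact Prod.ext e1 e2
      have himg1 : S.image Prod.fst = insert f.1 ((S.erase f).image Prod.fst) := by
        conv_lhs => rw [← Finset.insert_erase hfS]
        rw [Finset.image_insert]
      have himg2 : S.image Prod.snd = insert f.2 ((S.erase f).image Prod.snd) := by
        conv_lhs => rw [← Finset.insert_erase hfS]
        rw [Finset.image_insert]
      have hcardS : (S.erase f).card = S.card - 1 := Finset.card_erase_of_mem hfS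
      have hSpos : 1 ≤ S.card := Finset.card_pos.mpr hne
      have hb1 : ((S.erase f).image Prod.fst).card ≤ (S.image Prod.fst).card := by
        rw [himg1]; exact Finset.card_le_card (Finset.subset_insert _ _)
      have hb2 : ((S.erase f).image Prod.snd).card ≤ (S.image Prod.snd).card := by
        rw [himg2]; exact Finset.card_le_card (Finset.subset_insert _ _)
      rcases hkey with h | h
      · have : (S.image Prod.fst).card = ((S.erase f).image Prod.fst).card + 1 := by
          rw [himg1, Finset.card_insert_of_notMem h]
        omega
      · have : (S.image Prod.snd).card = ((S.erase f).image Prod.snd).card + 1 := by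
          rw [himg2, Finset.card_insert_of_notMem h]
        omega


lemma build (m : ℕ) : ∀ (n : ℕ) (S : Finset (ℕ × ℕ)), S.card = n → S.Nonempty →
    (∀ e ∈ S, e.1 ≤ m ∧ m < e.2) →
    (∀ e ∈ S, ∀ f ∈ S, Comp e f) →
    (S.image Prod.fst).card + (S.image Prod.snd).card = S.card + 1 →
    ∃ i j, (i, j) ∈ S ∧ IncTree S i j ∧ ∀ g ∈ S, Sub g (i, j) := by
  intro n
  induction n with
  | zero =>
    intro S hc hne _ _ _
    rw [Finset.card_eq_zero] at hc
    exact absurd hc (Finset.nonempty_iff_ne_empty.mp hne)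
  | succ n IH =>
    intro S hc hne hstr hcomp hvc
    have hlt : ∀ e ∈ S, e.1 < e.2 := fun e he => by have := hstr e he; omega
    obtain ⟨f, hfS, hfmax⟩ := S.exists_max_image (fun e => e.2 - e.1) hne
    have hmax : ∀ g ∈ S, Sub g f := by
      intro g hg
      have h1 := hcomp g hg f hfS
      have h2 := hfmax g hg
      have h3 := hlt g hg
      have h4 := hlt f hfS
      simp only [Comp, Sub] at h1 ⊢
      omega
    obtain ⟨i, j⟩ := f
    have hij : i < j := by have h : i ≤ m ∧ m < j := hstr _ hfS; omega
    by_cases h0 : S.erase (i, j) = ∅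
    · have hSf : S = {(i, j)} := by
        rcases Finset.erase_eq_empty_iff S (i, j) |>.mp h0 with h | h
        · exact absurd h (Finset.nonempty_iff_ne_empty.mp hne)
        · exact h
      subst hSf
      refine ⟨i, j, Finset.mem_singleton_self _, IncTree.single i j hij, ?_⟩
      intro g hg
      rw [Finset.mem_singleton] at hg
      subst hg
      exact ⟨le_refl _, le_refl _⟩
    · set S' := S.erase (i, j) with hS'
      have hne' : S'.Nonempty := Finset.nonempty_iff_ne_empty.mpr h0
      have hstr' : ∀ e ∈ S', e.1 ≤ m ∧ m < e.2 := fun e he => hstr e (Finset.mem_of_mem_erase he)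
      have hcomp' : ∀ e ∈ S', ∀ g ∈ S', Comp e g := fun e he g hg =>
        hcomp e (Finset.mem_of_mem_erase he) g (Finset.mem_of_mem_erase hg)
      have hlt' : ∀ e ∈ S', e.1 < e.2 := fun e he => hlt e (Finset.mem_of_mem_erase he)
      have hcard' : S'.card = n := by rw [hS', Finset.card_erase_of_mem hfS, hc]; omega
      have hge := chain_card S' hne' hlt' hcomp'
      have himg1 : S.image Prod.fst = insert i (S'.image Prod.fst) := by
        conv_lhs => rw [← Finset.insert_erase hfS]
        rw [Finset.image_insert]
      have himg2 : S.image Prod.snd = insert j (S'.image Prod.snd) := by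
        conv_lhs => rw [← Finset.insert_erase hfS]
        rw [Finset.image_insert]
      -- not both i and j appear among S' endpoints
      have hnotboth : ¬(i ∈ S'.image Prod.fst ∧ j ∈ S'.image Prod.snd) := by
        rintro ⟨h1, h2⟩
        obtain ⟨g, hg, hg1⟩ := Finset.mem_image.mp h1
        obtain ⟨k, hk, hk2⟩ := Finset.mem_image.mp h2
        have hgS := Finset.mem_of_mem_erase hg
        have hkS := Finset.mem_of_mem_erase hk
        have hgf := hmax g hgS
        have hkf := hmax k hkS
        have hgne := (Finset.mem_erase.mp hg).1
        have hkne := (Finset.mem_erase.mp hk).1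
        rcases hcomp g hgS k hkS with hs | hs
        · exact hkne (Prod.ext (by simp only [Sub] at hs hgf hkf ⊢; omega) hk2)
        · exact hgne (Prod.ext hg1 (by simp only [Sub] at hs hgf hkf ⊢; omega))
      -- at least one of them appears
      have hone : i ∈ S'.image Prod.fst ∨ j ∈ S'.image Prod.snd := by
        by_contra h
        push_neg at h
        rw [himg1, himg2, Finset.card_insert_of_notMem h.1,
          Finset.card_insert_of_notMem h.2] at hvc
        omega
      have hvc' : (S'.image Prod.fst).card + (S'.image Prod.snd).card = S'.card + 1 := by
        rcases hone with h | h
        · have hj : j ∉ S'.image Prod.snd := fun hj => hnotboth ⟨h, hj⟩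
          rw [himg1, himg2, Finset.insert_eq_self.mpr h,
            Finset.card_insert_of_notMem hj] at hvc
          omega
        · have hi : i ∉ S'.image Prod.fst := fun hi => hnotboth ⟨hi, h⟩
          rw [himg1, himg2, Finset.insert_eq_self.mpr h,
            Finset.card_insert_of_notMem hi] at hvc
          omega
      obtain ⟨i', j', hmem', hT', hmax'⟩ := IH S' hcard' hne' hstr' hcomp' hvc'
      have hsub' : Sub (i', j') (i, j) := hmax _ (Finset.mem_of_mem_erase hmem')
      have hne'' : (i', j') ≠ (i, j) := (Finset.mem_erase.mp hmem').1
      have hSins : S = insert (i, j) S' := (Finset.insert_erase hfS).symm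
      rcases hone with h | h
      · -- i appears in S' : so i' = i, j' < j, extend to the right
        obtain ⟨g, hg, hg1⟩ := Finset.mem_image.mp h
        have hgf' := hmax' g hg
        have hii : i' = i := by
          have h1 := hsub'.1
          simp only [Sub] at hgf'
          omega
        have hjj : j' < j := by
          have h1 := hsub'.2
          rcases lt_or_eq_of_le h1 with h' | h'
          · exact h'
          · exact absurd (Prod.ext hii h') hne''
        subst hii
        refine ⟨i', j, by rw [hSins]; exact Finset.mem_insert_self _ _, ?_, hmax⟩
        rw [hSins]
        exact IncTree.right S' i' j' j hT' hjj
      · -- j appears in S' : so j' = j, i < i', extend to the left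
        obtain ⟨g, hg, hg2⟩ := Finset.mem_image.mp h
        have hgf' := hmax' g hg
        have hjj : j' = j := by
          have h1 := hsub'.2
          simp only [Sub] at hgf'
          omega
        have hii : i < i' := by
          have h1 := hsub'.1
          rcases lt_or_eq_of_le h1 with h' | h'
          · exact h'
          · exact absurd (Prod.ext h'.symm hjj) hne''
        subst hjj
        refine ⟨i, j', by rw [hSins]; exact Finset.mem_insert_self _ _, ?_, hmax⟩
        rw [hSins]
        exact IncTree.left S' i' j' i hT' hii

end ZtAux

/-- Every ordered tree of interval chromatic number two containing none of
the three crossing three-edge ordered paths P, Q, R is a z-tree. -/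

theorem stmt_11 (E : Finset (ℕ × ℕ)) (hTree : PatTree E) (hchi : IntervalChrom2 E)
    (hfree : ∀ W : Finset (ℕ × ℕ), CrossingP3 W → ¬ PatContains E W) :
    ZTree E := by
  obtain ⟨hlt, hcard, hconn⟩ := hTree
  obtain ⟨m, hm⟩ := hchi
  have hcomp := ZtAux.all_comp hm hlt hconn hfree
  have hneE : E.Nonempty := by
    rcases E.eq_empty_or_nonempty with h | h
    · subst h; simp [verts] at hcard
    · exact h
  have hdisj : Disjoint (E.image Prod.fst) (E.image Prod.snd) := by
    rw [Finset.disjoint_left]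
    intro x hx hx'
    obtain ⟨p, hp, rfl⟩ := Finset.mem_image.mp hx
    obtain ⟨q, hq, hqe⟩ := Finset.mem_image.mp hx'
    have h1 := hm p hp
    have h2 := hm q hq
    omega
  have hvc : (E.image Prod.fst).card + (E.image Prod.snd).card = E.card + 1 := by
    simp only [verts] at hcard
    rwa [Finset.card_union_of_disjoint hdisj] at hcard
  obtain ⟨i, j, hmem, hT, -⟩ := ZtAux.build m E.card E rfl hneE hm hcomp hvc
  exact ⟨E, ∅, ∅, i, j, hT, by simp, by simp, by simp⟩
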